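/- arXiv:2009.06550 — 2 statements merged into one kernel-verified Lean document; each statement's English description precedes it below -/
import Mathlib

section
/- Suppose both the primal feasible set X(b) and the dual feasible set Y(c) are nonempty. Then strong duality (P* = D* with at least one problem attaining its optimum) holds under any of the following conditions: (1) there exists x ∈ relint C with −A x ∈ relint K, and b lies in the linear span of K (dual solvable); (2) there exists y ∈ relint K* with A* y ∈ relint C*, and c is orthogonal to the lineality space C ∩ (−C) of C (primal solvable); (3) there exists y ∈ relint K* with A* y ∈ relint C* and ⟨b, y⟩ = 0 (dual solvable); (4) there exists x ∈ relint C with −A x ∈ relint K and ⟨c, x⟩ = 0 (primal solvable). -/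
open RealInnerProductSpace Set Pointwise

variable {E E' : Type*}
  [NormedAddCommGroup E] [InnerProductSpace ℝ E] [FiniteDimensional ℝ E]
  [NormedAddCommGroup E'] [InnerProductSpace ℝ E'] [FiniteDimensional ℝ E']

/-- A nonempty closed convex cone containing `0`. -/
structure IsClosedConvexCone {F : Type*} [NormedAddCommGroup F] [InnerProductSpace ℝ F]
    (K : Set F) : Prop where
  closed : IsClosed K
  convex : Convex ℝ K
  smul_mem : ∀ ⦃x⦄, x ∈ K → ∀ ⦃t : ℝ⦄, 0 ≤ t → t • x ∈ K
  zero_mem : (0 : F) ∈ K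

/-- The dual cone `S* = {y : ⟨x,y⟩ ≥ 0 ∀ x ∈ S}`. -/
def dualCone {F : Type*} [NormedAddCommGroup F] [InnerProductSpace ℝ F] (S : Set F) : Set F :=
  {y | ∀ x ∈ S, 0 ≤ ⟪x, y⟫}

/-- The polar cone `S° = {y : ⟨x,y⟩ ≤ 0 ∀ x ∈ S}`. -/
def polarCone {F : Type*} [NormedAddCommGroup F] [InnerProductSpace ℝ F] (S : Set F) : Set F :=
  {y | ∀ x ∈ S, ⟪x, y⟫ ≤ 0}

/-- Primal feasible set `X(b) = {x ∈ C : b - A x ∈ K}`. -/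
def Xfeas (A : E →ₗ[ℝ] E') (K : Set E') (C : Set E) (b : E') : Set E :=
  {x | x ∈ C ∧ b - A x ∈ K}

/-- Dual feasible set `Y(c) = {y ∈ K* : A* y - c ∈ C*}`. -/
def Yfeas (A : E →ₗ[ℝ] E') (K : Set E') (C : Set E) (c : E) : Set E' :=
  {y | y ∈ dualCone K ∧ LinearMap.adjoint A y - c ∈ dualCone C}

/-- Primal optimal value `P* = sup {⟨c,x⟩ : x ∈ X(b)}`. -/
noncomputable def Pval (A : E →ₗ[ℝ] E') (K : Set E') (C : Set E) (b : E') (c : E) : ℝ :=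
  sSup ((fun x => ⟪c, x⟫) '' Xfeas A K C b)

/-- Dual optimal value `D* = inf {⟨b,y⟩ : y ∈ Y(c)}`. -/
noncomputable def Dval (A : E →ₗ[ℝ] E') (K : Set E') (C : Set E) (b : E') (c : E) : ℝ :=
  sInf ((fun y => ⟪b, y⟫) '' Yfeas A K C c)

/-- Recession cone of the primal feasible region: `{x ∈ C : A x ∈ -K}`. -/
def recXSet (A : E →ₗ[ℝ] E') (K : Set E') (C : Set E) : Set E :=
  {x | x ∈ C ∧ A x ∈ -K}

/-- Recession cone of the dual feasible region: `{y ∈ K* : A* y ∈ C*}`. -/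
def recYSet (A : E →ₗ[ℝ] E') (K : Set E') (C : Set E) : Set E' :=
  {y | y ∈ dualCone K ∧ LinearMap.adjoint A y ∈ dualCone C}

/-- `X(b)` is almost feasible. -/
def AlmostFeasX (A : E →ₗ[ℝ] E') (K : Set E') (C : Set E) (b : E') : Prop :=
  ∀ ε : ℝ, 0 < ε → ∃ bε : E', ‖bε‖ ≤ ε ∧ (Xfeas A K C (b + bε)).Nonempty

/-- `Y(c)` is almost feasible. -/
def AlmostFeasY (A : E →ₗ[ℝ] E') (K : Set E') (C : Set E) (c : E) : Prop :=
  ∀ ε : ℝ, 0 < ε → ∃ cε : E, ‖cε‖ ≤ ε ∧ (Yfeas A K C (c + cε)).Nonempty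

/-! ### Auxiliary lemmas -/

section AuxCone

variable {F : Type*} [NormedAddCommGroup F] [InnerProductSpace ℝ F]

lemma dualCone_zero_mem (S : Set F) : (0 : F) ∈ dualCone S := fun x _ => by simp

lemma dualCone_smul_mem {S : Set F} {y : F} (hy : y ∈ dualCone S) {t : ℝ} (ht : 0 ≤ t) :
    t • y ∈ dualCone S := fun x hx => by
  rw [real_inner_smul_right]
  exact mul_nonneg ht (hy x hx)

lemma IsClosedConvexCone.add_mem' {S : Set F} (hS : IsClosedConvexCone S) {a b : F}
    (ha : a ∈ S) (hb : b ∈ S) : a + b ∈ S := by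
  have h := hS.convex ha hb (by norm_num : (0:ℝ) ≤ 1/2) (by norm_num : (0:ℝ) ≤ 1/2)
    (by norm_num : (1/2 : ℝ) + 1/2 = 1)
  have h2 := hS.smul_mem h (by norm_num : (0:ℝ) ≤ 2)
  have h3 : (2:ℝ) • ((1/2 : ℝ) • a + (1/2 : ℝ) • b) = a + b := by
    rw [smul_add, smul_smul, smul_smul]
    norm_num
  rwa [h3] at h2

lemma isClosedConvexCone_dualCone (S : Set F) : IsClosedConvexCone (dualCone S) := by
  constructor
  · have : dualCone S = ⋂ x ∈ S, {y : F | 0 ≤ ⟪x, y⟫} := by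
      ext y; simp [dualCone]
    rw [this]
    exact isClosed_biInter fun x _ =>
      isClosed_le continuous_const (Continuous.inner continuous_const continuous_id)
  · intro y1 hy1 y2 hy2 a b ha hb hab x hx
    rw [inner_add_right, real_inner_smul_right, real_inner_smul_right]
    exact add_nonneg (mul_nonneg ha (hy1 x hx)) (mul_nonneg hb (hy2 x hx))
  · intro y hy t ht
    exact dualCone_smul_mem hy ht
  · exact dualCone_zero_mem S

lemma dualCone_dualCone [CompleteSpace F] {S : Set F} (hS : IsClosedConvexCone S) :
    dualCone (dualCone S) = S := by
  let KC : ProperCone ℝ F :=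
    { carrier := S
      add_mem' := fun hx hy => hS.add_mem' hx hy
      zero_mem' := hS.zero_mem
      smul_mem' := fun c x hx => by
        exact hS.smul_mem hx c.2
      isClosed' := hS.closed }
  have h := ProperCone.innerDual_innerDual KC
  ext x
  exact SetLike.ext_iff.1 h x

/-- A point of the intrinsic interior of a set containing `0` has a small ball
(relative to the linear span) around it inside the set. -/
lemma relint_ball {Q : Set F} (h0 : (0 : F) ∈ Q) {q : F} (hq : q ∈ intrinsicInterior ℝ Q) :
    ∃ ε > 0, ∀ z ∈ Submodule.span ℝ Q, ‖z - q‖ < ε → z ∈ Q := by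
  obtain ⟨y, hy, hyq⟩ := mem_intrinsicInterior.1 hq
  obtain ⟨ε, hε, hball⟩ := Metric.isOpen_iff.1 isOpen_interior y hy
  refine ⟨ε, hε, fun z hz hznorm => ?_⟩
  have hdir : Submodule.span ℝ Q ≤ (affineSpan ℝ Q).direction := by
    rw [Submodule.span_le]
    intro a ha
    have h2 : a -ᵥ 0 ∈ (affineSpan ℝ Q).direction :=
      AffineSubspace.vsub_mem_direction (subset_affineSpan ℝ Q ha) (subset_affineSpan ℝ Q h0)
    simpa using h2
  have hzaff : z ∈ affineSpan ℝ Q := by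
    have h3 := AffineSubspace.vadd_mem_of_mem_direction (hdir hz) (subset_affineSpan ℝ Q h0)
    simpa using h3
  have hmem : (⟨z, hzaff⟩ : affineSpan ℝ Q) ∈ Metric.ball y ε := by
    rw [Metric.mem_ball, Subtype.dist_eq, hyq, dist_eq_norm]
    exact hznorm
  exact (interior_subset (hball hmem) : (⟨z, hzaff⟩ : affineSpan ℝ Q) ∈ Subtype.val ⁻¹' Q)

/-- Translating a relative-interior-style ball by an element of the cone. -/
lemma ball_shift {Q : Set F} (hQ : IsClosedConvexCone Q) {a q : F} (ha : a ∈ Q) {ε : ℝ}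
    (hball : ∀ z ∈ Submodule.span ℝ Q, ‖z - q‖ < ε → z ∈ Q) :
    ∀ z ∈ Submodule.span ℝ Q, ‖z - (a + q)‖ < ε → z ∈ Q := by
  intro z hz hn
  have hza : z - a ∈ Submodule.span ℝ Q :=
    Submodule.sub_mem _ hz (Submodule.subset_span ha)
  have hn' : ‖(z - a) - q‖ < ε := by
    rwa [show z - a - q = z - (a + q) by abel]
  have hmem := hball _ hza hn'
  have := hQ.add_mem' ha hmem
  rwa [show a + (z - a) = z by abel] at this

/-- If a linear functional is nonnegative on `Q` and vanishes at a point around which `Q`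
contains a relative ball, then it vanishes on all of `Q`. -/
lemma inner_eq_zero_of_ball {Q : Set F} {q y : F} (hqQ : q ∈ Q) {ε : ℝ} (hε : 0 < ε)
    (hball : ∀ z ∈ Submodule.span ℝ Q, ‖z - q‖ < ε → z ∈ Q)
    (hy : ∀ z ∈ Q, 0 ≤ ⟪z, y⟫) (h0 : ⟪q, y⟫ = 0) : ∀ z ∈ Q, ⟪z, y⟫ = 0 := by
  intro z hz
  have hznn := hy z hz
  set t : ℝ := ε / (2 * (‖z‖ + 1)) with ht
  have htpos : 0 < t := by positivity
  have hmem : q - t • z ∈ Submodule.span ℝ Q :=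
    Submodule.sub_mem _ (Submodule.subset_span hqQ)
      (Submodule.smul_mem _ _ (Submodule.subset_span hz))
  have hz1 : (0:ℝ) < ‖z‖ + 1 := by positivity
  have hte : t * (‖z‖ + 1) = ε / 2 := by
    rw [ht]; field_simp
  have hnorm : ‖(q - t • z) - q‖ < ε := by
    rw [show q - t • z - q = -(t • z) by abel, norm_neg, norm_smul, Real.norm_eq_abs,
      abs_of_pos htpos]
    nlinarith [norm_nonneg z]
  have hQmem := hball _ hmem hnorm
  have h2 := hy _ hQmem
  rw [inner_sub_left, real_inner_smul_left, h0] at h2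
  nlinarith

end AuxCone

/-! ### Weak duality and the key equal-values lemma -/

lemma weak_duality {A : E →ₗ[ℝ] E'} {K : Set E'} {C : Set E} {b : E'} {c : E} {x : E} {y : E'}
    (hx : x ∈ Xfeas A K C b) (hy : y ∈ Yfeas A K C c) : ⟪c, x⟫ ≤ ⟪b, y⟫ := by
  obtain ⟨hxC, hxK⟩ := hx
  obtain ⟨hyK, hyC⟩ := hy
  have h1 : 0 ≤ ⟪b - A x, y⟫ := hyK _ hxK
  have h2 : 0 ≤ ⟪x, LinearMap.adjoint A y - c⟫ := hyC x hxC
  have e1 : ⟪b - A x, y⟫ = ⟪b, y⟫ - ⟪A x, y⟫ := by rw [inner_sub_left]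
  have e2 : ⟪x, LinearMap.adjoint A y - c⟫ = ⟪A x, y⟫ - ⟪c, x⟫ := by
    rw [inner_sub_right, LinearMap.adjoint_inner_right, ← real_inner_comm x c]
  linarith

lemma all_values_eq (A : E →ₗ[ℝ] E') (K : Set E') (C : Set E) (b : E') (c : E)
    (hXne : (Xfeas A K C b).Nonempty) (hYne : (Yfeas A K C c).Nonempty)
    (hv : ∀ x ∈ Xfeas A K C b, ∀ y ∈ Yfeas A K C c, ⟪c, x⟫ = ⟪b, y⟫) :
    Pval A K C b c = Dval A K C b c ∧ (∃ x ∈ Xfeas A K C b, ⟪c, x⟫ = Pval A K C b c)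
      ∧ ∃ y ∈ Yfeas A K C c, ⟪b, y⟫ = Dval A K C b c := by
  obtain ⟨x0, hx0⟩ := hXne
  obtain ⟨y0, hy0⟩ := hYne
  have hP : (fun x => ⟪c, x⟫) '' Xfeas A K C b = {⟪c, x0⟫} := by
    apply Set.eq_singleton_iff_unique_mem.2
    refine ⟨⟨x0, hx0, rfl⟩, ?_⟩
    rintro t ⟨x, hx, rfl⟩
    show ⟪c, x⟫ = ⟪c, x0⟫
    rw [hv x hx y0 hy0, ← hv x0 hx0 y0 hy0]
  have hD : (fun y => ⟪b, y⟫) '' Yfeas A K C c = {⟪c, x0⟫} := by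
    apply Set.eq_singleton_iff_unique_mem.2
    refine ⟨⟨y0, hy0, (hv x0 hx0 y0 hy0).symm⟩, ?_⟩
    rintro t ⟨y, hy, rfl⟩
    show ⟪b, y⟫ = ⟪c, x0⟫
    rw [← hv x0 hx0 y hy]
  refine ⟨?_, ⟨x0, hx0, ?_⟩, ⟨y0, hy0, ?_⟩⟩
  · rw [Pval, Dval, hP, hD, csSup_singleton, csInf_singleton]
  · rw [Pval, hP, csSup_singleton]
  · rw [Dval, hD, csInf_singleton, hv x0 hx0 y0 hy0]

/-! ### Cases (3) and (4): complementary relint conditions -/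

lemma case3_hv (A : E →ₗ[ℝ] E') (K : Set E') (C : Set E) (b : E') (c : E) {y₀ : E'}
    (hy₀ : y₀ ∈ intrinsicInterior ℝ (dualCone K))
    (hAy₀ : LinearMap.adjoint A y₀ ∈ intrinsicInterior ℝ (dualCone C))
    (hb0 : ⟪b, y₀⟫ = 0) :
    ∀ x ∈ Xfeas A K C b, ∀ y ∈ Yfeas A K C c, ⟪c, x⟫ = ⟪b, y⟫ := by
  intro x hx y hy
  obtain ⟨hxC, hxK⟩ := hx
  have hy₀K : y₀ ∈ dualCone K := intrinsicInterior_subset hy₀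
  have hAy₀C : LinearMap.adjoint A y₀ ∈ dualCone C := intrinsicInterior_subset hAy₀
  have h1 : 0 ≤ ⟪b - A x, y₀⟫ := hy₀K _ hxK
  have h2 : 0 ≤ ⟪x, LinearMap.adjoint A y₀⟫ := hAy₀C x hxC
  have hsum : ⟪b - A x, y₀⟫ + ⟪x, LinearMap.adjoint A y₀⟫ = 0 := by
    rw [inner_sub_left, LinearMap.adjoint_inner_right, hb0]
    ring
  have hz1 : ⟪b - A x, y₀⟫ = 0 := by linarith
  have hz2 : ⟪x, LinearMap.adjoint A y₀⟫ = 0 := by linarith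
  obtain ⟨ε1, hε1, hball1⟩ := relint_ball (dualCone_zero_mem K) hy₀
  obtain ⟨ε2, hε2, hball2⟩ := relint_ball (dualCone_zero_mem C) hAy₀
  have hK0 : ∀ z ∈ dualCone K, ⟪z, b - A x⟫ = 0 := by
    apply inner_eq_zero_of_ball hy₀K hε1 hball1
    · intro z hz
      have := hz _ hxK
      rwa [real_inner_comm] at this
    · rw [real_inner_comm]; exact hz1
  have hC0 : ∀ z ∈ dualCone C, ⟪z, x⟫ = 0 := by
    apply inner_eq_zero_of_ball hAy₀C hε2 hball2
    · intro z hz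
      have := hz x hxC
      rwa [real_inner_comm] at this
    · rw [real_inner_comm]; exact hz2
  obtain ⟨hyK, hyC⟩ := hy
  have f1 : ⟪b - A x, y⟫ = 0 := by
    rw [real_inner_comm]; exact hK0 y hyK
  have f2 : ⟪x, LinearMap.adjoint A y - c⟫ = 0 := by
    rw [real_inner_comm]; exact hC0 _ hyC
  have e1 : ⟪b - A x, y⟫ = ⟪b, y⟫ - ⟪A x, y⟫ := by rw [inner_sub_left]
  have e2 : ⟪x, LinearMap.adjoint A y - c⟫ = ⟪A x, y⟫ - ⟪c, x⟫ := by
    rw [inner_sub_right, LinearMap.adjoint_inner_right, ← real_inner_comm x c]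
  linarith

lemma case4_hv (A : E →ₗ[ℝ] E') (K : Set E') (C : Set E)
    (hK : IsClosedConvexCone K) (hC : IsClosedConvexCone C) (b : E') (c : E) {x₀ : E}
    (hx₀ : x₀ ∈ intrinsicInterior ℝ C) (hAx₀ : -A x₀ ∈ intrinsicInterior ℝ K)
    (hc0 : ⟪c, x₀⟫ = 0) :
    ∀ x ∈ Xfeas A K C b, ∀ y ∈ Yfeas A K C c, ⟪c, x⟫ = ⟪b, y⟫ := by
  intro x hx y hy
  obtain ⟨hyK, hyC⟩ := hy
  have hx₀C : x₀ ∈ C := intrinsicInterior_subset hx₀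
  have hAx₀K : -A x₀ ∈ K := intrinsicInterior_subset hAx₀
  have h1 : 0 ≤ ⟪x₀, LinearMap.adjoint A y - c⟫ := hyC x₀ hx₀C
  have h2 : 0 ≤ ⟪-A x₀, y⟫ := hyK _ hAx₀K
  have hsum : ⟪x₀, LinearMap.adjoint A y - c⟫ + ⟪-A x₀, y⟫ = 0 := by
    rw [inner_sub_right, LinearMap.adjoint_inner_right, inner_neg_left,
      ← real_inner_comm x₀ c, hc0]
    ring
  have hz1 : ⟪x₀, LinearMap.adjoint A y - c⟫ = 0 := by linarith
  have hz2 : ⟪-A x₀, y⟫ = 0 := by linarith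
  obtain ⟨ε1, hε1, hball1⟩ := relint_ball hC.zero_mem hx₀
  obtain ⟨ε2, hε2, hball2⟩ := relint_ball hK.zero_mem hAx₀
  have hCz : ∀ z ∈ C, ⟪z, LinearMap.adjoint A y - c⟫ = 0 :=
    inner_eq_zero_of_ball hx₀C hε1 hball1 (fun z hz => hyC z hz) hz1
  have hKz : ∀ z ∈ K, ⟪z, y⟫ = 0 :=
    inner_eq_zero_of_ball hAx₀K hε2 hball2 (fun z hz => hyK z hz) hz2
  have f1 : ⟪b - A x, y⟫ = 0 := hKz _ hx.2
  have f2 : ⟪x, LinearMap.adjoint A y - c⟫ = 0 := hCz x hx.1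
  have e1 : ⟪b - A x, y⟫ = ⟪b, y⟫ - ⟪A x, y⟫ := by rw [inner_sub_left]
  have e2 : ⟪x, LinearMap.adjoint A y - c⟫ = ⟪A x, y⟫ - ⟪c, x⟫ := by
    rw [inner_sub_right, LinearMap.adjoint_inner_right, ← real_inner_comm x c]
  linarith

/-! ### Case (1): a relint recession direction gives strong duality with dual attainment -/

set_option maxHeartbeats 2000000 in
lemma case1_main (A : E →ₗ[ℝ] E') (K : Set E') (C : Set E)
    (hK : IsClosedConvexCone K) (hC : IsClosedConvexCone C) (b : E') (c : E)
    (hXne : (Xfeas A K C b).Nonempty) (hYne : (Yfeas A K C c).Nonempty)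
    {x₀ : E} (hx₀ : x₀ ∈ intrinsicInterior ℝ C) (hAx₀ : -A x₀ ∈ intrinsicInterior ℝ K) :
    Pval A K C b c = Dval A K C b c ∧ ∃ y ∈ Yfeas A K C c, ⟪b, y⟫ = Dval A K C b c := by
  classical
  obtain ⟨xb, hxb⟩ := hXne
  obtain ⟨yb, hyb⟩ := hYne
  set p := Pval A K C b c with hpdef
  have himg_ne : ((fun x => ⟪c, x⟫) '' Xfeas A K C b).Nonempty := ⟨_, ⟨xb, hxb, rfl⟩⟩
  have himg_bdd : BddAbove ((fun x => ⟪c, x⟫) '' Xfeas A K C b) := by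
    refine ⟨⟪b, yb⟫, ?_⟩
    rintro t ⟨x, hx, rfl⟩
    exact weak_duality hx hyb
  have hub : ∀ x ∈ Xfeas A K C b, ⟪c, x⟫ ≤ p := fun x hx => le_csSup himg_bdd ⟨x, hx, rfl⟩
  have hlb : ∀ y ∈ Yfeas A K C c, p ≤ ⟪b, y⟫ := fun y hy =>
    csSup_le himg_ne (by rintro t ⟨x, hx, rfl⟩; exact weak_duality hx hy)
  -- Slater point
  obtain ⟨ε1, hε1, hball1⟩ := relint_ball hC.zero_mem hx₀
  obtain ⟨ε2, hε2, hball2⟩ := relint_ball hK.zero_mem hAx₀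
  have hx₀C : x₀ ∈ C := intrinsicInterior_subset hx₀
  have hAx₀K : -A x₀ ∈ K := intrinsicInterior_subset hAx₀
  set x₁ := xb + x₀ with hx1def
  set k₁ := (b - A xb) + -A x₀ with hk1def
  have hx₁C : x₁ ∈ C := hC.add_mem' hxb.1 hx₀C
  have hk₁K : k₁ ∈ K := hK.add_mem' hxb.2 hAx₀K
  have hball1' := ball_shift hC hxb.1 hball1
  have hball2' := ball_shift hK hxb.2 hball2
  have hbk : A x₁ + k₁ = b := by
    rw [hx1def, hk1def, map_add]; abel
  -- The cone `G`
  set G : Set (E' × ℝ) :=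
    {g | ∃ x ∈ C, ∃ k ∈ K, ∃ r : ℝ, 0 ≤ r ∧ g = (A x + k, ⟪c, x⟫ - r)} with hGdef
  have h0G : (0 : E' × ℝ) ∈ G :=
    ⟨0, hC.zero_mem, 0, hK.zero_mem, 0, le_refl 0, by simp [Prod.ext_iff]⟩
  have hGsmul : ∀ t : ℝ, 0 ≤ t → ∀ g ∈ G, t • g ∈ G := by
    rintro t ht g ⟨x, hx, k, hk, r, hr, rfl⟩
    refine ⟨t • x, hC.smul_mem hx ht, t • k, hK.smul_mem hk ht, t * r, mul_nonneg ht hr, ?_⟩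
    simp only [Prod.smul_mk, map_smul, smul_eq_mul, real_inner_smul_right, Prod.mk.injEq,
      smul_sub, smul_add]
    refine ⟨by simp, by ring⟩
  have hGconv : Convex ℝ G := by
    rintro g1 ⟨x1, hx1, k1, hk1, r1, hr1, rfl⟩ g2 ⟨x2, hx2, k2, hk2, r2, hr2, rfl⟩ μ ν hμ hν hμν
    refine ⟨μ • x1 + ν • x2, hC.convex hx1 hx2 hμ hν hμν, μ • k1 + ν • k2,
      hK.convex hk1 hk2 hμ hν hμν, μ * r1 + ν * r2,
      add_nonneg (mul_nonneg hμ hr1) (mul_nonneg hν hr2), ?_⟩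
    simp only [Prod.smul_mk, Prod.mk_add_mk, Prod.mk.injEq, map_add, map_smul, smul_eq_mul,
      inner_add_right, real_inner_smul_right, smul_sub, smul_add]
    constructor
    · abel
    · ring
  have hbG : ((b, ⟪c, xb⟫) : E' × ℝ) ∈ G := by
    refine ⟨xb, hxb.1, b - A xb, hxb.2, 0, le_refl 0, ?_⟩
    simp only [Prod.mk.injEq]
    exact ⟨by abel, by ring⟩
  have hnegG : (((0 : E'), (-1 : ℝ)) : E' × ℝ) ∈ G := by
    refine ⟨0, hC.zero_mem, 0, hK.zero_mem, 1, zero_le_one, ?_⟩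
    simp [Prod.ext_iff]
  set V := Submodule.span ℝ G with hVdef
  have h01V : (((0 : E'), (1 : ℝ)) : E' × ℝ) ∈ V := by
    have h := V.smul_mem (-1 : ℝ) (Submodule.subset_span hnegG)
    have he : (-1 : ℝ) • (((0 : E'), (-1 : ℝ)) : E' × ℝ) = ((0 : E'), (1 : ℝ)) := by
      simp [Prod.ext_iff]
    rwa [he] at h
  set q : E' × ℝ := (b, p) with hqdef
  have hqV : q ∈ V := by
    have h1 : ((b, ⟪c, xb⟫) : E' × ℝ) ∈ V := Submodule.subset_span hbG
    have h2 := V.add_mem h1 (V.smul_mem (p - ⟪c, xb⟫) h01V)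
    have he : ((b, ⟪c, xb⟫) : E' × ℝ) + (p - ⟪c, xb⟫) • (((0 : E'), (1 : ℝ)) : E' × ℝ) = q := by
      simp only [Prod.smul_mk, Prod.mk_add_mk, smul_eq_mul, smul_zero, hqdef, Prod.mk.injEq]
      exact ⟨by simp, by ring⟩
    rwa [he] at h2
  -- Pass to the subspace V
  set G' : Set V := Subtype.val ⁻¹' G with hG'def
  have hG'conv : Convex ℝ G' := hGconv.linear_preimage (V.subtype)
  have hGsubV : G ⊆ (V : Set (E' × ℝ)) := Submodule.subset_span
  have hspan' : Submodule.span ℝ G' = ⊤ := by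
    apply Submodule.map_injective_of_injective V.injective_subtype
    rw [Submodule.map_span, Submodule.map_top, Submodule.range_subtype]
    have himg : (⇑V.subtype '' G') = G := by
      rw [show ⇑V.subtype = (Subtype.val : V → E' × ℝ) from rfl, hG'def,
        Set.image_preimage_eq_inter_range, Subtype.range_val,
        Set.inter_eq_self_of_subset_left hGsubV]
    rw [himg, hVdef]
  have h0G' : (0 : V) ∈ G' := by
    show ((0 : V) : E' × ℝ) ∈ G
    simpa using h0G
  have haff' : affineSpan ℝ G' = ⊤ := by
    apply (AffineSubspace.coe_eq_univ_iff _).1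
    rw [← Set.insert_eq_self.2 h0G', affineSpan_insert_zero, hspan']
    simp
  obtain ⟨a₀, ha₀⟩ := hG'conv.interior_nonempty_iff_affineSpan_eq_top.2 haff'
  set q' : V := ⟨q, hqV⟩ with hq'def
  -- q' is not in the interior of G' in V
  have hq'nint : q' ∉ interior G' := by
    intro hint
    obtain ⟨ε, hε, hball⟩ := Metric.isOpen_iff.1 isOpen_interior q' hint
    set t := ε / 2 with htdef
    have htpos : 0 < t := by positivity
    have hzV : q + t • (((0 : E'), (1 : ℝ)) : E' × ℝ) ∈ V := V.add_mem hqV (V.smul_mem t h01V)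
    have hdist : (⟨_, hzV⟩ : V) ∈ Metric.ball q' ε := by
      rw [Metric.mem_ball, Subtype.dist_eq, dist_eq_norm]
      rw [show q + t • (((0 : E'), (1 : ℝ)) : E' × ℝ) - q = t • (((0 : E'), (1 : ℝ)) : E' × ℝ)
        by abel, norm_smul]
      have h1 : ‖(((0 : E'), (1 : ℝ)) : E' × ℝ)‖ = 1 := by simp [Prod.norm_def]
      rw [h1, Real.norm_eq_abs, abs_of_pos htpos]
      rw [htdef]; linarith
    have hmemG' : (⟨q + t • (((0 : E'), (1 : ℝ)) : E' × ℝ), hzV⟩ : V) ∈ G' :=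
      interior_subset (hball hdist)
    have hzG : q + t • (((0 : E'), (1 : ℝ)) : E' × ℝ) ∈ G := hmemG'
    obtain ⟨x, hxC, k, hkK, r, hr, heq⟩ := hzG
    have heq2 : ((b, p + t) : E' × ℝ) = (A x + k, ⟪c, x⟫ - r) := by
      rw [← heq, hqdef]
      simp only [Prod.smul_mk, Prod.mk_add_mk, smul_eq_mul, smul_zero, Prod.mk.injEq]
      exact ⟨by simp, by ring⟩
    rw [Prod.mk.injEq] at heq2
    have hfeas : x ∈ Xfeas A K C b := by
      refine ⟨hxC, ?_⟩
      rw [heq2.1]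
      rwa [show A x + k - A x = k by abel]
    have hval := hub x hfeas
    have hcx : ⟪c, x⟫ = p + t + r := by linarith [heq2.2]
    linarith
  -- Separation in V
  obtain ⟨f, hf⟩ := geometric_hahn_banach_open_point hG'conv.interior isOpen_interior hq'nint
  have hfle : ∀ g ∈ G', f g ≤ f q' := by
    intro g hg
    by_contra hgt
    push_neg at hgt
    set δ := f g - f q' with hδdef
    have hδpos : 0 < δ := by linarith
    set t := min (1/2 : ℝ) (δ / (|f g - f a₀| + 1)) with htdef
    have hM : (0:ℝ) < |f g - f a₀| + 1 := by positivity
    have ht0 : 0 < t := lt_min (by norm_num) (by positivity)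
    have ht1 : t ≤ 1/2 := min_le_left _ _
    have hcombo : (1 - t) • g + t • a₀ ∈ interior G' :=
      hG'conv.combo_self_interior_mem_interior hg ha₀ (by linarith) ht0 (by ring)
    have hlt := hf _ hcombo
    rw [map_add, map_smul, map_smul, smul_eq_mul, smul_eq_mul] at hlt
    have hm : t * (|f g - f a₀| + 1) ≤ δ := (le_div_iff₀ hM).1 (min_le_right _ _)
    have h1 : f g - f a₀ ≤ |f g - f a₀| := le_abs_self _
    nlinarith
  -- Extension to the whole space
  obtain ⟨W, hW⟩ := Submodule.exists_isCompl V
  set Ψ : E' × ℝ →ₗ[ℝ] ℝ := (f : V →ₗ[ℝ] ℝ) ∘ₗ (V.linearProjOfIsCompl W hW) with hΨdef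
  have hΨv : ∀ (z : E' × ℝ) (hz : z ∈ V), Ψ z = f ⟨z, hz⟩ := by
    intro z hz
    show (f : V →ₗ[ℝ] ℝ) (V.linearProjOfIsCompl W hW z) = f ⟨z, hz⟩
    have h2 : V.linearProjOfIsCompl W hW z = ⟨z, hz⟩ :=
      Submodule.linearProjOfIsCompl_apply_left hW (⟨z, hz⟩ : V)
    rw [h2]
    rfl
  set β := f q' with hβdef
  have hΨle : ∀ g ∈ G, Ψ g ≤ β := by
    intro g hg
    rw [hΨv g (Submodule.subset_span hg)]
    exact hfle _ hg
  have hΨ0 : ∀ g ∈ G, Ψ g ≤ 0 := by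
    intro g hg
    by_contra hpos
    push_neg at hpos
    have htpos : 0 < (|β| + 1) / Ψ g := by positivity
    have h := hΨle (((|β| + 1) / Ψ g) • g) (hGsmul _ htpos.le g hg)
    rw [map_smul, smul_eq_mul, div_mul_cancel₀ _ (ne_of_gt hpos)] at h
    nlinarith [le_abs_self β, abs_nonneg β]
  have hβ0 : 0 ≤ β := by
    have h := hΨle 0 h0G
    simpa using h
  -- Components of Ψ
  set Φ : E' →L[ℝ] ℝ := LinearMap.toContinuousLinearMap (Ψ ∘ₗ LinearMap.inl ℝ E' ℝ) with hΦdef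
  set y : E' := (InnerProductSpace.toDual ℝ E').symm Φ with hydef
  set s : ℝ := Ψ ((0 : E'), (1 : ℝ)) with hsdef
  have hyz : ∀ z : E', ⟪y, z⟫ = Ψ (z, 0) := by
    intro z
    rw [hydef, InnerProductSpace.toDual_symm_apply]
    simp [hΦdef]
  have hΨzt : ∀ (z : E') (t : ℝ), Ψ (z, t) = ⟪y, z⟫ + t * s := by
    intro z t
    have he : ((z, t) : E' × ℝ) = (z, 0) + t • (((0 : E'), (1 : ℝ)) : E' × ℝ) := by
      simp [Prod.ext_iff]
    rw [he, map_add, map_smul, smul_eq_mul, hyz, hsdef]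
  have hs0 : 0 ≤ s := by
    have h := hΨ0 _ hnegG
    rw [hΨzt] at h
    rw [inner_zero_right] at h
    linarith
  have hyK : ∀ k ∈ K, ⟪y, k⟫ ≤ 0 := by
    intro k hk
    have hkG : ((k, 0) : E' × ℝ) ∈ G := by
      refine ⟨0, hC.zero_mem, k, hk, 0, le_refl 0, ?_⟩
      simp [Prod.ext_iff]
    have h := hΨ0 _ hkG
    rwa [hΨzt, zero_mul, add_zero] at h
  have hyCineq : ∀ x ∈ C, ⟪y, A x⟫ + ⟪c, x⟫ * s ≤ 0 := by
    intro x hx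
    have hxG : ((A x, ⟪c, x⟫) : E' × ℝ) ∈ G := by
      refine ⟨x, hx, 0, hK.zero_mem, 0, le_refl 0, ?_⟩
      simp [Prod.ext_iff]
    have h := hΨ0 _ hxG
    rw [hΨzt] at h
    linarith
  have hqβ : ⟪y, b⟫ + p * s = β := by
    have h := hΨv q hqV
    have h2 : Ψ q = ⟪y, b⟫ + p * s := by
      show Ψ (b, p) = _
      rw [hΨzt]
    calc ⟪y, b⟫ + p * s = Ψ q := h2.symm
      _ = f ⟨q, hqV⟩ := h
      _ = β := rfl
  rcases eq_or_lt_of_le hs0 with hseq | hslt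
  · -- s = 0: contradiction using the Slater point
    exfalso
    have hyb : ⟪y, b⟫ = β := by rw [← hqβ, ← hseq, mul_zero, add_zero]
    have h1 : ⟪y, A x₁⟫ ≤ 0 := by
      have h := hyCineq x₁ hx₁C
      rw [← hseq, mul_zero, add_zero] at h
      exact h
    have h2 : ⟪y, k₁⟫ ≤ 0 := hyK k₁ hk₁K
    have hsplit : ⟪y, A x₁⟫ + ⟪y, k₁⟫ = β := by
      rw [← inner_add_right, hbk, hyb]
    have hz1 : ⟪y, A x₁⟫ = 0 := by linarith
    have hz2 : ⟪y, k₁⟫ = 0 := by linarith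
    have hCzero : ∀ z ∈ C, ⟪z, -(LinearMap.adjoint A y)⟫ = 0 := by
      apply inner_eq_zero_of_ball hx₁C hε1 hball1'
      · intro z hz
        have h := hyCineq z hz
        rw [← hseq, mul_zero, add_zero] at h
        rw [inner_neg_right, LinearMap.adjoint_inner_right]
        linarith [real_inner_comm (A z) y]
      · rw [inner_neg_right, LinearMap.adjoint_inner_right]
        linarith [real_inner_comm (A x₁) y]
    have hKzero : ∀ z ∈ K, ⟪z, -y⟫ = 0 := by
      apply inner_eq_zero_of_ball hk₁K hε2 hball2'
      · intro z hz
        rw [inner_neg_right]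
        linarith [hyK z hz, real_inner_comm z y]
      · rw [inner_neg_right]
        linarith [hz2, real_inner_comm k₁ y]
    have ha₀G' : a₀ ∈ G' := interior_subset ha₀
    have ha₀G : (↑a₀ : E' × ℝ) ∈ G := ha₀G'
    obtain ⟨x, hx, k, hk, r, hr, heq⟩ := id ha₀G
    have hfa₀ : f a₀ = Ψ ↑a₀ := by
      have h := hΨv (↑a₀) (Submodule.subset_span ha₀G)
      have h3 : f (⟨(↑a₀ : E' × ℝ), Submodule.subset_span ha₀G⟩ : V) = f a₀ :=
        congrArg f (Subtype.ext rfl)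
      exact (h.trans h3).symm
    have hΨa₀ : Ψ ↑a₀ = 0 := by
      rw [heq, hΨzt, ← hseq, mul_zero, add_zero, inner_add_right]
      have e1 : ⟪y, A x⟫ = 0 := by
        have h := hCzero x hx
        rw [inner_neg_right, LinearMap.adjoint_inner_right] at h
        linarith [real_inner_comm (A x) y]
      have e2 : ⟪y, k⟫ = 0 := by
        have h := hKzero k hk
        rw [inner_neg_right] at h
        linarith [real_inner_comm k y]
      rw [e1, e2]; ring
    have hlt := hf a₀ ha₀
    rw [hfa₀, hΨa₀] at hlt
    linarith
  · -- s > 0: construct the dual optimal solution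
    set w := s⁻¹ • (-y) with hwdef
    have hsinv : 0 ≤ s⁻¹ := inv_nonneg.2 hslt.le
    have hss : s * s⁻¹ = 1 := mul_inv_cancel₀ (ne_of_gt hslt)
    have hwK : w ∈ dualCone K := by
      intro k hk
      have hcomm : ⟪k, y⟫ = ⟪y, k⟫ := real_inner_comm y k
      rw [hwdef, real_inner_smul_right, inner_neg_right, hcomm]
      exact mul_nonneg hsinv (neg_nonneg.2 (hyK k hk))
    have hwC : LinearMap.adjoint A w - c ∈ dualCone C := by
      intro x hx
      have hAx := hyCineq x hx
      have hwAx : ⟪x, LinearMap.adjoint A w⟫ = s⁻¹ * -⟪y, A x⟫ := by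
        rw [LinearMap.adjoint_inner_right, hwdef, real_inner_smul_right, inner_neg_right,
          ← real_inner_comm (A x) y]
      have hsne : s ≠ 0 := ne_of_gt hslt
      have hkey : 0 ≤ s⁻¹ * (-⟪y, A x⟫ - ⟪c, x⟫ * s) :=
        mul_nonneg hsinv (by linarith)
      have hexp2 : s⁻¹ * (-⟪y, A x⟫ - ⟪c, x⟫ * s) = s⁻¹ * -⟪y, A x⟫ - ⟪c, x⟫ := by
        field_simp
      rw [hexp2] at hkey
      rw [inner_sub_right, hwAx, ← real_inner_comm x c]
      linarith
    have hwY : w ∈ Yfeas A K C c := ⟨hwK, hwC⟩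
    have hwb : ⟪b, w⟫ ≤ p := by
      have hcomm : ⟪b, y⟫ = ⟪y, b⟫ := real_inner_comm y b
      have hyb2 : -⟪y, b⟫ = p * s - β := by linarith [hqβ]
      have hsne : s ≠ 0 := ne_of_gt hslt
      rw [hwdef, real_inner_smul_right, inner_neg_right, hcomm, hyb2]
      have hexp : s⁻¹ * (p * s - β) = p - s⁻¹ * β := by
        field_simp
      rw [hexp]
      linarith [mul_nonneg hsinv hβ0]
    have hwb' : ⟪b, w⟫ = p := le_antisymm hwb (hlb w hwY)
    have hD : Dval A K C b c = p := by
      apply le_antisymm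
      · have h := csInf_le (⟨p, by rintro t ⟨y', hy', rfl⟩; exact hlb y' hy'⟩ :
          BddBelow ((fun y => ⟪b, y⟫) '' Yfeas A K C c)) ⟨w, hwY, rfl⟩
        exact le_trans h (le_of_eq hwb')
      · exact le_csInf ⟨⟪b, w⟫, w, hwY, rfl⟩ (by rintro t ⟨y', hy', rfl⟩; exact hlb y' hy')
    exact ⟨by rw [hD], w, hwY, by rw [hD, hwb']⟩

/-! ### Case (2): by duality/swapping from case (1) -/

lemma case2_main (A : E →ₗ[ℝ] E') (K : Set E') (C : Set E)
    (hK : IsClosedConvexCone K) (hC : IsClosedConvexCone C) (b : E') (c : E)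
    (hXne : (Xfeas A K C b).Nonempty) (hYne : (Yfeas A K C c).Nonempty)
    {y₀ : E'} (hy₀ : y₀ ∈ intrinsicInterior ℝ (dualCone K))
    (hAy₀ : LinearMap.adjoint A y₀ ∈ intrinsicInterior ℝ (dualCone C)) :
    Pval A K C b c = Dval A K C b c ∧ ∃ x ∈ Xfeas A K C b, ⟪c, x⟫ = Pval A K C b c := by
  set A' : E' →ₗ[ℝ] E := -(LinearMap.adjoint A) with hA'def
  have hKC : dualCone (dualCone K) = K := dualCone_dualCone hK
  have hCC : dualCone (dualCone C) = C := dualCone_dualCone hC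
  have hadj : LinearMap.adjoint A' = -A := by
    rw [hA'def, map_neg, LinearMap.adjoint_adjoint]
  have hX' : Xfeas A' (dualCone C) (dualCone K) (-c) = Yfeas A K C c := by
    ext z
    simp only [Xfeas, Yfeas, Set.mem_setOf_eq, hA'def, LinearMap.neg_apply]
    have he : -c - -(LinearMap.adjoint A z) = LinearMap.adjoint A z - c := by abel
    rw [he]
  have hY' : Yfeas A' (dualCone C) (dualCone K) (-b) = Xfeas A K C b := by
    ext z
    simp only [Xfeas, Yfeas, Set.mem_setOf_eq, hadj, LinearMap.neg_apply, hKC, hCC]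
    have he : -(A z) - -b = b - A z := by abel
    rw [he]
  have hval1 : Pval A' (dualCone C) (dualCone K) (-c) (-b) = -(Dval A K C b c) := by
    rw [Pval, hX']
    have himg : (fun y : E' => ⟪-b, y⟫) '' Yfeas A K C c
        = -((fun y : E' => ⟪b, y⟫) '' Yfeas A K C c) := by
      ext t
      simp only [Set.mem_image, Set.mem_neg]
      constructor
      · rintro ⟨z, hz, rfl⟩
        exact ⟨z, hz, by rw [inner_neg_left]; ring⟩
      · rintro ⟨z, hz, hzeq⟩
        refine ⟨z, hz, ?_⟩
        rw [inner_neg_left]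
        linarith
    rw [himg, Dval, Real.sInf_def, neg_neg]
  have hval2 : Dval A' (dualCone C) (dualCone K) (-c) (-b) = -(Pval A K C b c) := by
    rw [Dval, hY']
    have himg : (fun x : E => ⟪-c, x⟫) '' Xfeas A K C b
        = -((fun x : E => ⟪c, x⟫) '' Xfeas A K C b) := by
      ext t
      simp only [Set.mem_image, Set.mem_neg]
      constructor
      · rintro ⟨z, hz, rfl⟩
        exact ⟨z, hz, by rw [inner_neg_left]; ring⟩
      · rintro ⟨z, hz, hzeq⟩
        refine ⟨z, hz, ?_⟩
        rw [inner_neg_left]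
        linarith
    rw [himg, Pval, Real.sInf_def, neg_neg]
  have hAy₀' : -A' y₀ ∈ intrinsicInterior ℝ (dualCone C) := by
    rw [hA'def]
    simpa using hAy₀
  obtain ⟨heq, w, hwY, hwval⟩ := case1_main A' (dualCone C) (dualCone K)
    (isClosedConvexCone_dualCone C) (isClosedConvexCone_dualCone K) (-c) (-b)
    (by rw [hX']; exact hYne) (by rw [hY']; exact hXne) hy₀ hAy₀'
  rw [hval1, hval2] at heq
  rw [hY'] at hwY
  rw [hval2] at hwval
  rw [inner_neg_left] at hwval
  exact ⟨by linarith, w, hwY, by linarith⟩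

theorem stmt2 (A : E →ₗ[ℝ] E') (K : Set E') (C : Set E)
    (hK : IsClosedConvexCone K) (hC : IsClosedConvexCone C) (b : E') (c : E)
    (hXne : (Xfeas A K C b).Nonempty) (hYne : (Yfeas A K C c).Nonempty) :
    ((∃ x ∈ intrinsicInterior ℝ C, -A x ∈ intrinsicInterior ℝ K) ∧ b ∈ Submodule.span ℝ K →
      Pval A K C b c = Dval A K C b c ∧
        ∃ y ∈ Yfeas A K C c, ⟪b, y⟫ = Dval A K C b c) ∧
    ((∃ y ∈ intrinsicInterior ℝ (dualCone K),
          LinearMap.adjoint A y ∈ intrinsicInterior ℝ (dualCone C)) ∧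
        (∀ z ∈ C ∩ -C, ⟪c, z⟫ = 0) →
      Pval A K C b c = Dval A K C b c ∧
        ∃ x ∈ Xfeas A K C b, ⟪c, x⟫ = Pval A K C b c) ∧
    ((∃ y ∈ intrinsicInterior ℝ (dualCone K),
          LinearMap.adjoint A y ∈ intrinsicInterior ℝ (dualCone C) ∧ ⟪b, y⟫ = 0) →
      Pval A K C b c = Dval A K C b c ∧
        ∃ y ∈ Yfeas A K C c, ⟪b, y⟫ = Dval A K C b c) ∧
    ((∃ x ∈ intrinsicInterior ℝ C, -A x ∈ intrinsicInterior ℝ K ∧ ⟪c, x⟫ = 0) →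
      Pval A K C b c = Dval A K C b c ∧
        ∃ x ∈ Xfeas A K C b, ⟪c, x⟫ = Pval A K C b c) := by
  refine ⟨?_, ?_, ?_, ?_⟩
  · rintro ⟨⟨x₀, hx₀, hAx₀⟩, -⟩
    exact case1_main A K C hK hC b c hXne hYne hx₀ hAx₀
  · rintro ⟨⟨y₀, hy₀, hAy₀⟩, -⟩
    exact case2_main A K C hK hC b c hXne hYne hy₀ hAy₀
  · rintro ⟨y₀, hy₀, hAy₀, hb0⟩
    obtain ⟨h1, _, h3⟩ := all_values_eq A K C b c hXne hYne (case3_hv A K C b c hy₀ hAy₀ hb0)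
    exact ⟨h1, h3⟩
  · rintro ⟨x₀, hx₀, hAx₀, hc0⟩
    obtain ⟨h1, h2, _⟩ := all_values_eq A K C b c hXne hYne
      (case4_hv A K C hK hC b c hx₀ hAx₀ hc0)
    exact ⟨h1, h2⟩
end

section
/- Suppose the primal is strictly feasible, i.e., there exists x ∈ relint C with b − A x ∈ relint K. Then the primal optimum is finite, i.e., the set {⟨c, x⟩ : x ∈ X(b)} is nonempty and bounded above, if and only if the dual feasible set Y(c) is nonempty. -/
open RealInnerProductSpace Set Pointwise

variable {E E' : Type*}
  [NormedAddCommGroup E] [InnerProductSpace ℝ E] [FiniteDimensional ℝ E]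
  [NormedAddCommGroup E'] [InnerProductSpace ℝ E'] [FiniteDimensional ℝ E']

section AuxLemmas

lemma aux_span_le_direction {F : Type*} [NormedAddCommGroup F] [InnerProductSpace ℝ F]
    {S : Set F} (h0 : (0:F) ∈ S) :
    Submodule.span ℝ S ≤ (affineSpan ℝ S).direction := by
  rw [direction_affineSpan]
  refine Submodule.span_le.2 fun x hx => ?_
  have : x ∈ S -ᵥ S := ⟨x, hx, 0, h0, by simp⟩
  exact Submodule.subset_span this

lemma aux_intrinsic_ball {F : Type*} [NormedAddCommGroup F] [InnerProductSpace ℝ F]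
    {S : Set F} {p : F} (hp : p ∈ intrinsicInterior ℝ S) :
    ∃ ρ > 0, ∀ d ∈ (affineSpan ℝ S).direction, ‖d‖ ≤ ρ → p + d ∈ S := by
  rw [intrinsicInterior] at hp
  obtain ⟨p', hp', rfl⟩ := hp
  obtain ⟨ε, hε, hball⟩ := Metric.isOpen_iff.1 isOpen_interior p' hp'
  refine ⟨ε/2, by positivity, fun d hd hdn => ?_⟩
  have hmem : d +ᵥ (p' : F) ∈ affineSpan ℝ S := AffineSubspace.vadd_mem_of_mem_direction hd p'.2
  have hq : (⟨d + p', hmem⟩ : affineSpan ℝ S) ∈ Metric.ball p' ε := by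
    simp only [Metric.mem_ball, Subtype.dist_eq]
    calc dist (d + (p':F)) (p':F) = ‖d‖ := by simp [dist_eq_norm]
    _ < ε := by linarith
  have := interior_subset (hball hq)
  simpa [add_comm] using this

lemma aux_right_inverse_bound {G G' : Type*} [NormedAddCommGroup G] [NormedSpace ℝ G]
    [NormedAddCommGroup G'] [NormedSpace ℝ G'] [FiniteDimensional ℝ G] [FiniteDimensional ℝ G']
    (T : G →ₗ[ℝ] G') :
    ∃ κ > 0, ∀ u ∈ LinearMap.range T, ∃ g, T g = u ∧ ‖g‖ ≤ κ * ‖u‖ := by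
  obtain ⟨R, hR⟩ := T.rangeRestrict.exists_rightInverse_of_surjective
    (LinearMap.range_eq_top.2 T.surjective_rangeRestrict)
  set Rc := LinearMap.toContinuousLinearMap R with hRc
  refine ⟨‖Rc‖ + 1, by positivity, fun u hu => ?_⟩
  refine ⟨R ⟨u, hu⟩, ?_, ?_⟩
  · have := congrFun (congrArg DFunLike.coe hR) ⟨u, hu⟩
    simpa [Subtype.ext_iff] using this
  · calc ‖R ⟨u, hu⟩‖ = ‖Rc ⟨u, hu⟩‖ := rfl
    _ ≤ ‖Rc‖ * ‖(⟨u, hu⟩ : LinearMap.range T)‖ := Rc.le_opNorm _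
    _ ≤ (‖Rc‖ + 1) * ‖u‖ := by
        have h' : ‖(⟨u, hu⟩ : LinearMap.range T)‖ = ‖u‖ := rfl
        rw [h']; nlinarith [norm_nonneg u, norm_nonneg Rc]

lemma aux_archimedean {a m u : ℝ} (h : ∀ t : ℝ, 0 ≤ t → a + t * m < u) : m ≤ 0 := by
  by_contra hm
  push_neg at hm
  have h0 := h 0 le_rfl
  have := h ((u - a)/m) (div_nonneg (by linarith) hm.le)
  rw [div_mul_cancel₀ _ (ne_of_gt hm)] at this
  linarith

end AuxLemmas

section MainAux

variable {E E' : Type*}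
  [NormedAddCommGroup E] [InnerProductSpace ℝ E] [FiniteDimensional ℝ E]
  [NormedAddCommGroup E'] [InnerProductSpace ℝ E'] [FiniteDimensional ℝ E']

lemma aux_weak (A : E →ₗ[ℝ] E') (K : Set E') (C : Set E) (b : E') (c : E)
    {x : E} {y : E'} (hx : x ∈ Xfeas A K C b) (hy : y ∈ Yfeas A K C c) : ⟪c, x⟫ ≤ ⟪b, y⟫ := by
  have h1 : 0 ≤ ⟪b - A x, y⟫ := hy.1 _ hx.2
  have h2 : 0 ≤ ⟪x, LinearMap.adjoint A y - c⟫ := hy.2 x hx.1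
  rw [inner_sub_left] at h1
  rw [inner_sub_right] at h2
  have e1 : ⟪x, LinearMap.adjoint A y⟫ = ⟪A x, y⟫ := by
    rw [real_inner_comm, LinearMap.adjoint_inner_left, real_inner_comm]
  have e2 : ⟪c, x⟫ = ⟪x, c⟫ := real_inner_comm _ _
  linarith

end MainAux

set_option maxHeartbeats 2000000 in
theorem stmt4 (A : E →ₗ[ℝ] E') (K : Set E') (C : Set E)
    (hK : IsClosedConvexCone K) (hC : IsClosedConvexCone C) (b : E') (c : E)
    (hslater : ∃ x ∈ intrinsicInterior ℝ C, b - A x ∈ intrinsicInterior ℝ K) :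
    (((fun x => ⟪c, x⟫) '' Xfeas A K C b).Nonempty ∧
        BddAbove ((fun x => ⟪c, x⟫) '' Xfeas A K C b)) ↔
      (Yfeas A K C c).Nonempty := by
  obtain ⟨xh, hxhi, hkhi⟩ := hslater
  have hxhC : xh ∈ C := intrinsicInterior_subset hxhi
  have hkhK : b - A xh ∈ K := intrinsicInterior_subset hkhi
  constructor
  · rintro ⟨hne, hbd⟩
    set P : ℝ := sSup ((fun x => ⟪c, x⟫) '' Xfeas A K C b) with hPdef
    obtain ⟨ρC, hρC, hballC⟩ := aux_intrinsic_ball hxhi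
    obtain ⟨ρK, hρK, hballK⟩ := aux_intrinsic_ball hkhi
    set W := Submodule.span ℝ C with hWdef
    set V := Submodule.span ℝ K with hVdef
    set T : (↥W × ↥V) →ₗ[ℝ] E' :=
      (A.comp W.subtype).comp (LinearMap.fst ℝ ↥W ↥V)
        + V.subtype.comp (LinearMap.snd ℝ ↥W ↥V) with hTdef
    obtain ⟨κ, hκ, hT⟩ := aux_right_inverse_bound T
    set B : ℝ := |⟪c, xh⟫| + |P| with hBdef
    have hB0 : 0 ≤ B := by positivity
    set lam : ℝ := min (1/2) (1/(8*(B+1))) with hlamdef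
    have hlam0 : 0 < lam := lt_min (by norm_num) (by positivity)
    have hlamhalf : lam ≤ 1/2 := min_le_left _ _
    have hlamB : lam * (B+1) ≤ 1/8 := by
      have h := min_le_right (1/2 : ℝ) (1/(8*(B+1)))
      rw [← hlamdef, le_div_iff₀ (by positivity)] at h
      nlinarith
    set δ : ℝ := min (min (lam*ρC/κ) (lam*ρK/κ)) (1/(4*(‖c‖*κ+1))) with hδdef
    have hδ0 : 0 < δ := lt_min (lt_min (by positivity) (by positivity)) (by positivity)
    have hδC : δ * κ ≤ lam * ρC := by
      have h : δ ≤ lam*ρC/κ := le_trans (min_le_left _ _) (min_le_left _ _)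
      rwa [le_div_iff₀ hκ] at h
    have hδK : δ * κ ≤ lam * ρK := by
      have h : δ ≤ lam*ρK/κ := le_trans (min_le_left _ _) (min_le_right _ _)
      rwa [le_div_iff₀ hκ] at h
    have hδc : δ * (4*(‖c‖*κ+1)) ≤ 1 := by
      have h : δ ≤ 1/(4*(‖c‖*κ+1)) := min_le_right _ _
      rwa [le_div_iff₀ (by positivity)] at h
    -- Step A : almost feasible points have value at most P + 1
    have keyA : ∀ x ∈ C, ∀ k ∈ K, ‖b - A x - k‖ ≤ δ → ⟪c, x⟫ ≤ P + 1 := by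
      intro x hx k hk hu
      set u : E' := b - A x - k with hudef
      have huT : u ∈ LinearMap.range T := by
        refine ⟨(⟨xh - x, sub_mem (Submodule.subset_span hxhC) (Submodule.subset_span hx)⟩,
                 ⟨(b - A xh) - k, sub_mem (Submodule.subset_span hkhK) (Submodule.subset_span hk)⟩),
               ?_⟩
        simp only [hTdef, LinearMap.add_apply, LinearMap.coe_comp, Function.comp_apply,
          LinearMap.fst_apply, LinearMap.snd_apply, Submodule.coe_subtype, map_sub]
        rw [hudef]; abel
      obtain ⟨g, hgT, hgn⟩ := hT u huT
      set w : E := (g.1 : E) with hwdef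
      set m : E' := (g.2 : E') with hmdef
      have hAwm : A w + m = u := by
        have := hgT
        simp only [hTdef, LinearMap.add_apply, LinearMap.coe_comp, Function.comp_apply,
          LinearMap.fst_apply, LinearMap.snd_apply, Submodule.coe_subtype] at this
        exact this
      have hwW : w ∈ W := g.1.2
      have hmV : m ∈ V := g.2.2
      have hun : ‖u‖ ≤ δ := hu
      have hwn : ‖w‖ ≤ κ * δ := by
        calc ‖w‖ = ‖g.1‖ := rfl
        _ ≤ ‖g‖ := norm_fst_le g
        _ ≤ κ * ‖u‖ := hgn
        _ ≤ κ * δ := by nlinarith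
      have hmn : ‖m‖ ≤ κ * δ := by
        calc ‖m‖ = ‖g.2‖ := rfl
        _ ≤ ‖g‖ := norm_snd_le g
        _ ≤ κ * ‖u‖ := hgn
        _ ≤ κ * δ := by nlinarith
      have hμ0 : (0:ℝ) ≤ (1 - lam)/lam := div_nonneg (by linarith) hlam0.le
      have hlamμ : lam * ((1 - lam)/lam) = 1 - lam := by field_simp
      have hμκ : ((1 - lam)/lam) * (κ * δ) ≤ ρC ⊓ ρK → True := fun _ => trivial
      have hμwn : ‖((1 - lam)/lam) • w‖ ≤ ρC := by
        rw [norm_smul, Real.norm_eq_abs, abs_of_nonneg hμ0]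
        have h1 : ((1 - lam)/lam) * ‖w‖ ≤ ((1 - lam)/lam) * (κ * δ) :=
          mul_le_mul_of_nonneg_left hwn hμ0
        have h2 : ((1 - lam)/lam) * (κ * δ) * lam = (1 - lam) * (κ * δ) := by
          field_simp
        nlinarith [mul_pos hρC hlam0, norm_nonneg w]
      have hμmn : ‖((1 - lam)/lam) • m‖ ≤ ρK := by
        rw [norm_smul, Real.norm_eq_abs, abs_of_nonneg hμ0]
        have h1 : ((1 - lam)/lam) * ‖m‖ ≤ ((1 - lam)/lam) * (κ * δ) :=
          mul_le_mul_of_nonneg_left hmn hμ0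
        nlinarith [mul_pos hρK hlam0, norm_nonneg m]
      have hx1 : xh + ((1 - lam)/lam) • w ∈ C :=
        hballC _ (Submodule.smul_mem _ _ (aux_span_le_direction hC.zero_mem hwW)) hμwn
      have hk1 : (b - A xh) + ((1 - lam)/lam) • m ∈ K :=
        hballK _ (Submodule.smul_mem _ _ (aux_span_le_direction hK.zero_mem hmV)) hμmn
      set x' : E := lam • (xh + ((1 - lam)/lam) • w) + (1-lam) • x with hx'def
      have hx'C : x' ∈ C := hC.convex hx1 hx hlam0.le (by linarith) (by ring)
      have hm' : m = u - A w := by rw [← hAwm]; abel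
      have hbx' : b - A x' = lam • ((b - A xh) + ((1 - lam)/lam) • m) + (1-lam) • k := by
        rw [hx'def, hm', hudef]
        simp only [map_add, map_smul]
        match_scalars <;> field_simp <;> ring
      have hk'K : b - A x' ∈ K := by
        rw [hbx']
        exact hK.convex hk1 hk hlam0.le (by linarith) (by ring)
      have hval : ⟪c, x'⟫ ≤ P := le_csSup hbd ⟨x', ⟨hx'C, hk'K⟩, rfl⟩
      have hexp : ⟪c, x'⟫
          = lam*⟪c, xh⟫ + (lam * ((1 - lam)/lam))*⟪c, w⟫ + (1-lam)*⟪c, x⟫ := by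
        rw [hx'def]
        simp only [inner_add_right, real_inner_smul_right]
        ring
      rw [hlamμ] at hexp
      have hcw : |⟪c, w⟫| ≤ ‖c‖ * (κ*δ) := by
        refine le_trans (abs_real_inner_le_norm _ _) ?_
        nlinarith [norm_nonneg c]
      have hcδ : ‖c‖ * (κ*δ) ≤ 1/4 := by nlinarith [norm_nonneg c, mul_nonneg (norm_nonneg c) hκ.le]
      have hq : |⟪c, w⟫| ≤ 1/4 := le_trans hcw hcδ
      have habs_s : |⟪c, xh⟫| ≤ B := by rw [hBdef]; exact le_add_of_nonneg_right (abs_nonneg _)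
      have habs_P : |P| ≤ B := by rw [hBdef]; exact le_add_of_nonneg_left (abs_nonneg _)
      have hval' : lam*⟪c, xh⟫ + (1-lam)*⟪c, w⟫ + (1-lam)*⟪c, x⟫ ≤ P := by
        rw [← hexp]; exact hval
      have hPle : P ≤ B := le_trans (le_abs_self P) habs_P
      have hsge : -B ≤ ⟪c, xh⟫ := neg_le_of_abs_le habs_s
      have h5 : (1-lam)*(⟪c, x⟫ - P) ≤ 1/2 := by
        nlinarith [mul_nonneg hlam0.le (show (0:ℝ) ≤ B - P by linarith),
          mul_nonneg hlam0.le (show (0:ℝ) ≤ ⟪c, xh⟫ + B by linarith),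
          abs_le.1 hq, hlamB,
          mul_le_mul_of_nonneg_left (abs_le.1 hq).1 (show (0:ℝ) ≤ 1 - lam by linarith)]
      nlinarith [h5]
    -- Step B : the point (0, P+2) is not in the closure of M
    set M : Set (E' × ℝ) := {p | ∃ x ∈ C, b - A x - p.1 ∈ K ∧ p.2 ≤ ⟪c, x⟫} with hMdef
    have hMconv : Convex ℝ M := by
      rintro p ⟨x1, hx1, hk1, hv1⟩ q ⟨x2, hx2, hk2, hv2⟩ a b' ha hb' hab
      obtain rfl : b' = 1 - a := by linarith
      refine ⟨a•x1 + (1-a)•x2, hC.convex hx1 hx2 ha hb' hab, ?_, ?_⟩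
      · have hid : b - A (a•x1 + (1-a)•x2) - (a•p + (1-a)•q).1
            = a•(b - A x1 - p.1) + (1-a)•(b - A x2 - q.1) := by
          simp only [map_add, map_smul, Prod.fst_add, Prod.smul_fst]
          module
        rw [hid]
        exact hK.convex hk1 hk2 ha hb' hab
      · have h2 : (a•p + (1-a)•q).2 = a*p.2 + (1-a)*q.2 := rfl
        rw [h2, inner_add_right, real_inner_smul_right, real_inner_smul_right]
        exact add_le_add (by nlinarith) (by nlinarith)
    have hznot : ((0 : E'), P + 2) ∉ closure M := by
      intro hz
      obtain ⟨p, hpM, hpd⟩ := Metric.mem_closure_iff.1 hz (min δ (1/2)) (lt_min hδ0 (by norm_num))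
      obtain ⟨x, hx, hbk, hv⟩ := hpM
      have hd1 : dist ((0:E'), P + 2).1 p.1 < δ :=
        lt_of_le_of_lt (le_trans (le_max_left _ _) (le_of_eq (Prod.dist_eq).symm))
          (lt_of_lt_of_le hpd (min_le_left _ _))
      have hd2 : dist ((0:E'), P + 2).2 p.2 < 1/2 :=
        lt_of_le_of_lt (le_trans (le_max_right _ _) (le_of_eq (Prod.dist_eq).symm))
          (lt_of_lt_of_le hpd (min_le_right _ _))
      have hnp : ‖b - A x - (b - A x - p.1)‖ ≤ δ := by
        rw [sub_sub_cancel]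
        have : dist ((0:E'), P + 2).1 p.1 = ‖p.1‖ := by simp [dist_eq_norm]
        linarith [this ▸ hd1]
      have hA := keyA x hx (b - A x - p.1) hbk hnp
      have hd2' : P + 2 - p.2 < 1/2 := by
        have := (abs_lt.1 (by rwa [Real.dist_eq] at hd2)).2
        linarith
      linarith
    -- Step C : separation
    obtain ⟨f, u0, hfM, hfz⟩ :=
      geometric_hahn_banach_closed_point hMconv.closure isClosed_closure hznot
    have hfM' : ∀ p ∈ M, f p < u0 := fun p hp => hfM p (subset_closure hp)
    set γ : ℝ := f (0, 1) with hγdef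
    have hflin : ∀ (w : E') (t : ℝ), f (w, t) = f (w, 0) + t * γ := by
      intro w t
      have h : ((w, t) : E' × ℝ) = (w, (0:ℝ)) + t • ((0:E'), (1:ℝ)) := by simp
      rw [h, map_add, map_smul]
      simp [smul_eq_mul, hγdef]
    have hf00 : f ((0:E'), (0:ℝ)) = 0 := by
      have : ((0:E'), (0:ℝ)) = (0 : E' × ℝ) := rfl
      rw [this, map_zero]
    have hfz' : u0 < (P+2) * γ := by
      have h := hfz
      rw [hflin 0 (P+2), hf00, zero_add] at h
      exact h
    have hmemM : ∀ x ∈ C, ∀ k ∈ K, ∀ s : ℝ, 0 ≤ s →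
        ((b - A x - k, ⟪c, x⟫ - s) : E' × ℝ) ∈ M := by
      intro x hx k hk s hs
      refine ⟨x, hx, ?_, by simp; linarith⟩
      show b - A x - (b - A x - k) ∈ K
      rw [sub_sub_cancel]; exact hk
    have hγ0 : 0 ≤ γ := by
      have h' : ∀ t:ℝ, 0 ≤ t → f (b, 0) + t * (-γ) < u0 := by
        intro t ht
        have h := hfM' _ (hmemM 0 hC.zero_mem 0 hK.zero_mem t ht)
        simp only [map_zero, sub_zero, inner_zero_right, zero_sub] at h
        rw [hflin b (-t)] at h
        linarith
      linarith [aux_archimedean h']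
    have hγpos : 0 < γ := by
      rcases hγ0.lt_or_eq with h | h
      · exact h
      · exfalso
        have hmem := hfM' _ (hmemM xh hxhC (b - A xh) hkhK 0 le_rfl)
        rw [sub_self, sub_zero, hflin 0 _, hf00, zero_add] at hmem
        rw [← h] at hmem hfz'
        nlinarith
    -- Step D : construct the dual solution
    set y0 : E' := (InnerProductSpace.toDual ℝ E').symm (f.comp (ContinuousLinearMap.inl ℝ E' ℝ))
      with hy0def
    have hy0 : ∀ v : E', ⟪v, y0⟫ = f (v, 0) := by
      intro v
      rw [real_inner_comm, hy0def]
      simpa using InnerProductSpace.toDual_symm_apply (y := v)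
    refine ⟨γ⁻¹ • y0, ?_, ?_⟩
    · intro k hk
      have hfk : 0 ≤ f (k, 0) := by
        have h' : ∀ t:ℝ, 0 ≤ t → f (b, 0) + t * (-(f (k, 0))) < u0 := by
          intro t ht
          have h := hfM' _ (hmemM 0 hC.zero_mem (t•k) (hK.smul_mem hk ht) 0 le_rfl)
          simp only [map_zero, sub_zero, inner_zero_right] at h
          have e : ((b - t•k, (0:ℝ)) : E' × ℝ) = (b, (0:ℝ)) - t•(k, (0:ℝ)) := by simp
          rw [e, map_sub, map_smul, smul_eq_mul] at h
          linarith
        linarith [aux_archimedean h']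
      rw [real_inner_smul_right, hy0]
      exact mul_nonneg (inv_nonneg.2 hγpos.le) hfk
    · intro x0 hx0
      have hkey : γ * ⟪c, x0⟫ - f (A x0, 0) ≤ 0 := by
        refine aux_archimedean (a := f (b,0)) (u := u0) ?_
        intro t ht
        have h := hfM' _ (hmemM (t•x0) (hC.smul_mem hx0 ht) 0 hK.zero_mem 0 le_rfl)
        simp only [map_smul, sub_zero, real_inner_smul_right] at h
        rw [hflin (b - t • A x0) (t * ⟪c, x0⟫)] at h
        have e : ((b - t • A x0, (0:ℝ)) : E' × ℝ) = (b, (0:ℝ)) - t•(A x0, (0:ℝ)) := by simp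
        rw [e, map_sub, map_smul, smul_eq_mul] at h
        nlinarith [h]
      have e1 : ⟪x0, LinearMap.adjoint A (γ⁻¹ • y0) - c⟫
          = γ⁻¹ * f (A x0, 0) - ⟪c, x0⟫ := by
        rw [inner_sub_right, map_smul, real_inner_smul_right]
        have e2 : ⟪x0, LinearMap.adjoint A y0⟫ = f (A x0, 0) := by
          rw [real_inner_comm, LinearMap.adjoint_inner_left, real_inner_comm, hy0]
        rw [e2, real_inner_comm x0 c]
      rw [e1]
      have h3 : γ⁻¹ * (γ * ⟪c, x0⟫) ≤ γ⁻¹ * f (A x0, 0) :=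
        mul_le_mul_of_nonneg_left (by linarith) (inv_nonneg.2 hγpos.le)
      rw [inv_mul_cancel_left₀ (ne_of_gt hγpos)] at h3
      linarith
  · rintro ⟨y, hy⟩
    refine ⟨⟨⟪c, xh⟫, ⟨xh, ⟨hxhC, hkhK⟩, rfl⟩⟩, ⟨⟪b, y⟫, ?_⟩⟩
    rintro v ⟨x, hx, rfl⟩
    exact aux_weak A K C b c hx hy
end
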